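/- Let μ, ν be valuations on K[x] extending v with μ ≤ ν (meaning μ(f) ≤ ν(f) for all f ∈ K[x]) and μ ≠ ν. Let φ be a monic polynomial of minimal degree among those satisfying μ(φ) < ν(φ). Then for every f ∈ K[x], if the initial term of φ in the graded algebra of μ does not divide the initial term of f, then μ(f) = ν(f). -/

import Mathlib

open Polynomial

section Preamble

variable {Λ : Type*} [AddCommGroup Λ] [LinearOrder Λ] [IsOrderedAddMonoid Λ]

/-- A (Krull) valuation on a commutative ring, written additively, with value `⊤` at `0`. -/
def IsVal {R : Type*} [CommRing R] (μ : R → WithTop Λ) : Prop :=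
  μ 0 = ⊤ ∧ μ 1 = 0 ∧ (∀ a b, μ (a * b) = μ a + μ b) ∧ ∀ a b, min (μ a) (μ b) ≤ μ (a + b)

variable {K : Type*} [Field K]

/-- `μ` is a valuation on `K[x]` whose restriction to `K` is `v`. -/
def ExtendsVal (v : K → WithTop Λ) (μ : Polynomial K → WithTop Λ) : Prop :=
  ∀ a : K, μ (Polynomial.C a) = v a

/-- `a ∼_μ b`: the initial terms of `a` and `b` in the graded algebra of `μ` coincide. -/
def MuEquiv (μ : Polynomial K → WithTop Λ) (a b : Polynomial K) : Prop :=
  (μ a = μ b ∧ μ a < μ (a - b)) ∨ (μ a = ⊤ ∧ μ b = ⊤)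

/-- `h ∣_μ g` : the initial term of `h` divides the initial term of `g` in the
graded algebra `G_μ`. -/
def MuDvd (μ : Polynomial K → WithTop Λ) (h g : Polynomial K) : Prop :=
  ∃ c, MuEquiv μ (h * c) g

/-- `g` is `μ`-minimal: `g ∤_μ f` for all nonzero `f` of degree smaller than `deg g`. -/
def MuMinimal (μ : Polynomial K → WithTop Λ) (g : Polynomial K) : Prop :=
  ∀ f : Polynomial K, f ≠ 0 → f.degree < g.degree → ¬ MuDvd μ g f

/-- `g` is `μ`-irreducible: the principal ideal of `G_μ` generated by the initial term of `g`
is a nonzero prime ideal. -/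
def MuIrreducible (μ : Polynomial K → WithTop Λ) (g : Polynomial K) : Prop :=
  μ g ≠ ⊤ ∧ ¬ MuDvd μ g 1 ∧ ∀ a b : Polynomial K, MuDvd μ g (a * b) → MuDvd μ g a ∨ MuDvd μ g b

/-- A (MacLane–Vaquié) key polynomial for `μ`: monic, `μ`-minimal and `μ`-irreducible. -/
def IsKeyPol (μ : Polynomial K → WithTop Λ) (φ : Polynomial K) : Prop :=
  φ.Monic ∧ MuMinimal μ φ ∧ MuIrreducible μ φ

/-- A key polynomial for `μ` of minimal degree. -/
def MinKeyPol (μ : Polynomial K → WithTop Λ) (φ : Polynomial K) : Prop :=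
  IsKeyPol μ φ ∧ ∀ ψ : Polynomial K, IsKeyPol μ ψ → φ.degree ≤ ψ.degree

/-- The coefficients of the `g`-adic expansion `f = ∑ a_s g^s`, `deg a_s < deg g`. -/
noncomputable def adicCoeff (g : Polynomial K) : Polynomial K → ℕ → Polynomial K
  | f, 0 => f %ₘ g
  | f, (s + 1) => adicCoeff g (f /ₘ g) s

/-- The truncation `μ_g` of `μ` : `μ_g (∑ a_s g^s) = min_s μ (a_s g^s)`. -/
noncomputable def truncVal (μ : Polynomial K → WithTop Λ) (g f : Polynomial K) : WithTop Λ :=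
  (Finset.range (f.natDegree + 1)).inf fun s => μ (adicCoeff g f s * g ^ s)

/-- The augmented valuation `[μ; φ, γ]`, acting on `φ`-expansions by
`ν(∑ a_s φ^s) = min_s (μ(a_s) + s γ)`. -/
noncomputable def augVal (μ : Polynomial K → WithTop Λ) (φ : Polynomial K) (γ : WithTop Λ)
    (f : Polynomial K) : WithTop Λ :=
  (Finset.range (f.natDegree + 1)).inf fun s => μ (adicCoeff φ f s) + s • γ

end Preamble

section MyHelpers

variable {Λ : Type*} [AddCommGroup Λ] [LinearOrder Λ] [IsOrderedAddMonoid Λ] {R : Type*} [CommRing R]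

lemma IsVal.neg_eq {μ : R → WithTop Λ} (hμ : IsVal μ) (a : R) : μ (-a) = μ a := by
  have h1 : μ (-1 : R) + μ (-1 : R) = 0 := by
    rw [← hμ.2.2.1]; simpa using hμ.2.1
  have h2 : μ (-1 : R) = 0 := by
    cases hx : μ (-1 : R) with
    | top => rw [hx] at h1; simp at h1
    | coe y =>
      rw [hx, ← WithTop.coe_add, show ((0 : WithTop Λ) = ((0 : Λ) : WithTop Λ)) from rfl,
        WithTop.coe_eq_coe] at h1
      have hy : y = 0 := by
        rcases lt_trichotomy y 0 with h | h | h
        · exact absurd (add_neg h h) (by rw [h1]; exact lt_irrefl 0)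
        · exact h
        · exact absurd (add_pos h h) (by rw [h1]; exact lt_irrefl 0)
      rw [hy]
      rfl
  have : μ (-a) = μ ((-1) * a) := by rw [neg_one_mul]
  rw [this, hμ.2.2.1, h2, zero_add]

lemma IsVal.add_eq_left {μ : R → WithTop Λ} (hμ : IsVal μ) {a b : R}
    (h : μ a < μ b) : μ (a + b) = μ a := by
  refine le_antisymm ?_ (by simpa [min_eq_left h.le] using hμ.2.2.2 a b)
  have h3 := hμ.2.2.2 (a + b) (-b)
  rw [add_neg_cancel_right, hμ.neg_eq] at h3
  rcases le_total (μ (a + b)) (μ b) with hc | hc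
  · rwa [min_eq_left hc] at h3
  · rw [min_eq_right hc] at h3
    exact absurd (h.trans_le h3) (lt_irrefl _)

end MyHelpers

/-- if `μ < ν` and `φ` is a monic polynomial of minimal degree with
`μ(φ) < ν(φ)`, then for every `f`, `φ ∤_μ f` implies `μ(f) = ν(f)`. -/
theorem tangent_direction_stability {K : Type*} [Field K] {Λ : Type*}
    [AddCommGroup Λ] [LinearOrder Λ] [IsOrderedAddMonoid Λ] (v : K → WithTop Λ) (hv : IsVal v)
    (μ ν : Polynomial K → WithTop Λ) (hμ : IsVal μ) (hν : IsVal ν)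
    (hμv : ExtendsVal v μ) (hνv : ExtendsVal v ν)
    (hle : ∀ f : Polynomial K, μ f ≤ ν f) (hne : μ ≠ ν)
    (φ : Polynomial K) (hφm : φ.Monic) (hφlt : μ φ < ν φ)
    (hφmin : ∀ g : Polynomial K, g.Monic → μ g < ν g → φ.degree ≤ g.degree) :
    ∀ f : Polynomial K, ¬ MuDvd μ φ f → μ f = ν f := by
  have hsmall : ∀ r : Polynomial K, r.degree < φ.degree → μ r = ν r := by
    intro r hr
    rcases eq_or_ne r 0 with rfl | hr0
    · rw [hμ.1, hν.1]
    · have hc0 : r.leadingCoeff ≠ 0 := leadingCoeff_ne_zero.mpr hr0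
      set g := r * C r.leadingCoeff⁻¹ with hg
      have hgm : g.Monic := monic_mul_leadingCoeff_inv hr0
      have hgd : g.degree = r.degree := degree_mul_leadingCoeff_inv r hr0
      have hgeq : μ g = ν g := by
        refine le_antisymm (hle g) ?_
        by_contra hlt
        push_neg at hlt
        exact absurd (hφmin g hgm hlt) (by rw [hgd]; exact not_le.mpr hr)
      have hrg : r = g * C r.leadingCoeff := by
        rw [hg, mul_assoc, ← C_mul, inv_mul_cancel₀ hc0, C_1, mul_one]
      rw [hrg, hμ.2.2.1, hν.2.2.1, hμv, hνv, hgeq]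
  intro f hndvd
  set q := f /ₘ φ with hq
  set r := f %ₘ φ with hr
  have hfe : r + φ * q = f := modByMonic_add_div f φ
  have hrd : r.degree < φ.degree := degree_modByMonic_lt f hφm
  have hc : μ r = ν r := hsmall r hrd
  by_cases hA : μ (φ * q) < μ r
  · exfalso
    apply hndvd
    refine ⟨q, Or.inl ⟨?_, ?_⟩⟩
    · rw [← hfe, add_comm]
      exact (hμ.add_eq_left hA).symm
    · have hd : φ * q - f = -r := by rw [← hfe]; ring
      rw [hd, hμ.neg_eq]
      exact hA
  · push_neg at hA
    by_cases hB : μ r < ν (φ * q)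
    · have hνf : ν f = ν r := by
        rw [← hfe, hν.add_eq_left (hc ▸ hB)]
      have h1 : μ r ≤ μ f := by
        rw [← hfe]
        exact le_trans (le_min le_rfl hA) (hμ.2.2.2 r (φ * q))
      exact le_antisymm (hle f) (by rw [hνf, ← hc]; exact h1)
    · push_neg at hB
      have hAB : μ (φ * q) = ν (φ * q) := le_antisymm (hle _) (hB.trans hA)
      have hrA : μ r = μ (φ * q) := le_antisymm hA (hAB ▸ hB)
      rcases eq_or_ne (μ (φ * q)) ⊤ with htop | hfin
      · have hrt : μ r = ⊤ := hrA.trans htop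
        have hμf : μ f = ⊤ := by
          have h4 := hμ.2.2.2 r (φ * q)
          rw [hrt, htop, hfe] at h4
          simpa using h4
        have hνf : ν f = ⊤ := le_top.antisymm (hμf ▸ hle f)
        rw [hμf, hνf]
      · exfalso
        rw [hμ.2.2.1, hν.2.2.1] at hAB
        rw [hμ.2.2.1] at hfin
        have hνtop : ν φ + ν q ≠ ⊤ := hAB ▸ hfin
        have hνφ : ν φ ≠ ⊤ := by intro h; exact hνtop (by rw [h, top_add])
        have hνq : ν q ≠ ⊤ := by intro h; exact hνtop (by rw [h, add_top])
        have hμφ : μ φ ≠ ⊤ := ne_top_of_lt hφlt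
        have hμq : μ q ≠ ⊤ := ne_top_of_le_ne_top hνq (hle q)
        obtain ⟨a, ha⟩ := WithTop.ne_top_iff_exists.mp hμφ
        obtain ⟨b, hb⟩ := WithTop.ne_top_iff_exists.mp hμq
        obtain ⟨c', hc'⟩ := WithTop.ne_top_iff_exists.mp hνφ
        obtain ⟨d, hd⟩ := WithTop.ne_top_iff_exists.mp hνq
        have hltφ : a < c' := by
          rw [← WithTop.coe_lt_coe, ha, hc']; exact hφlt
        have hleq : b ≤ d := by
          rw [← WithTop.coe_le_coe, hb, hd]; exact hle q
        have heq : a + b = c' + d := by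
          rw [← WithTop.coe_eq_coe, WithTop.coe_add, WithTop.coe_add, ha, hb, hc', hd]
          exact hAB
        exact absurd heq (ne_of_lt (add_lt_add_of_lt_of_le hltφ hleq))
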